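/- Let n ≥ 1, let M be an n×n matrix over ℂ, and let B and I be nonempty complementary subsets of Fin n. Let M' := M.map (RatFunc.C) be M viewed as a matrix over RatFunc ℂ. Then M'_II - X • 1 is invertible over RatFunc ℂ, and as multisets of complex numbers σ(R(M';B)) = σ(M') - σ(M'_II) and σ⁻¹(R(M';B)) = σ(M'_II) - σ(M'), where - is truncated multiset subtraction. -/

import Mathlib

set_option synthInstance.maxHeartbeats 1000000
set_option maxHeartbeats 1000000

open Matrix

/-- The isospectral reduction of `M` over `B` (with interior index set `I`):
`R(M;B) = M_BB - M_BI (M_II - X•1)⁻¹ M_IB`. -/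
noncomputable def isoRed {n : ℕ} (M : Matrix (Fin n) (Fin n) (RatFunc ℂ))
    (B I : Finset (Fin n)) : Matrix ↥B ↥B (RatFunc ℂ) :=
  M.submatrix (Subtype.val : ↥B → Fin n) (Subtype.val : ↥B → Fin n) -
    M.submatrix (Subtype.val : ↥B → Fin n) (Subtype.val : ↥I → Fin n) *
      (M.submatrix (Subtype.val : ↥I → Fin n) (Subtype.val : ↥I → Fin n) -
        (RatFunc.X : RatFunc ℂ) • 1)⁻¹ *
      M.submatrix (Subtype.val : ↥I → Fin n) (Subtype.val : ↥B → Fin n)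

/-- The spectrum of a matrix over `RatFunc ℂ`: the multiset of complex roots of the
numerator of `det (M - X•1)`. -/
noncomputable def spec {α : Type} [Fintype α] [DecidableEq α]
    (M : Matrix α α (RatFunc ℂ)) : Multiset ℂ :=
  ((M - (RatFunc.X : RatFunc ℂ) • 1).det).num.roots

/-- The inverse spectrum of a matrix over `RatFunc ℂ`: the multiset of complex roots of the
denominator of `det (M - X•1)`. -/
noncomputable def invSpec {α : Type} [Fintype α] [DecidableEq α]
    (M : Matrix α α (RatFunc ℂ)) : Multiset ℂ :=
  ((M - (RatFunc.X : RatFunc ℂ) • 1).det).denom.roots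

open Polynomial in
lemma roots_num_denom_div (p q : ℂ[X]) (hp : p ≠ 0) (hq : q ≠ 0) :
    (algebraMap ℂ[X] (RatFunc ℂ) p / algebraMap ℂ[X] (RatFunc ℂ) q).num.roots
      = p.roots - q.roots ∧
    (algebraMap ℂ[X] (RatFunc ℂ) p / algebraMap ℂ[X] (RatFunc ℂ) q).denom.roots
      = q.roots - p.roots := by
  set f := algebraMap ℂ[X] (RatFunc ℂ) p / algebraMap ℂ[X] (RatFunc ℂ) q with hf
  have hfne : f ≠ 0 := div_ne_zero (RatFunc.algebraMap_ne_zero hp) (RatFunc.algebraMap_ne_zero hq)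
  have hnum : f.num ≠ 0 := RatFunc.num_ne_zero hfne
  have hden : f.denom ≠ 0 := f.denom_ne_zero
  have key : p * f.denom = q * f.num := by
    apply RatFunc.algebraMap_injective ℂ
    rw [_root_.map_mul, _root_.map_mul]
    have h0 : algebraMap ℂ[X] (RatFunc ℂ) p / algebraMap ℂ[X] (RatFunc ℂ) q
        = algebraMap ℂ[X] (RatFunc ℂ) f.num / algebraMap ℂ[X] (RatFunc ℂ) f.denom := by
      rw [RatFunc.num_div_denom, hf]
    rw [div_eq_div_iff (RatFunc.algebraMap_ne_zero hq) (RatFunc.algebraMap_ne_zero hden)] at h0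
    rw [h0]; ring
  have cop := f.isCoprime_num_denom
  have notboth : ∀ a : ℂ, ¬ (f.num.IsRoot a ∧ f.denom.IsRoot a) := by
    rintro a ⟨h1, h2⟩
    obtain ⟨u, v, huv⟩ := cop
    have := congrArg (Polynomial.eval a) huv
    simp [h1.eq_zero, h2.eq_zero] at this
  constructor <;> ext a <;>
  · rw [Multiset.count_sub, count_roots, count_roots, count_roots]
    have hmul := Polynomial.rootMultiplicity_mul (x := a) (p := p) (q := f.denom)
      (mul_ne_zero hp hden)
    rw [key, Polynomial.rootMultiplicity_mul (x := a) (mul_ne_zero hq hnum)] at hmul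
    have hz : rootMultiplicity a f.num = 0 ∨ rootMultiplicity a f.denom = 0 := by
      by_contra h
      push_neg at h
      exact notboth a ⟨(Polynomial.rootMultiplicity_pos hnum).mp (Nat.pos_of_ne_zero h.1),
        (Polynomial.rootMultiplicity_pos hden).mp (Nat.pos_of_ne_zero h.2)⟩
    omega

open Polynomial in
noncomputable def qpoly {α : Type} [Fintype α] [DecidableEq α] (N : Matrix α α ℂ) : ℂ[X] :=
  (N.map Polynomial.C - (Polynomial.X : ℂ[X]) • (1 : Matrix α α ℂ[X])).det

open Polynomial in
lemma qpoly_ne_zero {α : Type} [Fintype α] [DecidableEq α] (N : Matrix α α ℂ) :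
    qpoly N ≠ 0 := by
  have h : N.map Polynomial.C - (Polynomial.X : ℂ[X]) • (1 : Matrix α α ℂ[X])
      = -(charmatrix N) := by
    ext i j
    by_cases hij : i = j <;>
      simp [charmatrix, hij, Matrix.one_apply, Matrix.smul_apply, Matrix.sub_apply,
        Matrix.scalar_apply, Matrix.diagonal_apply, RingHom.mapMatrix_apply, Matrix.map_apply]
  rw [qpoly, h, Matrix.det_neg]
  intro hz
  have hmon := N.charpoly_monic
  rw [Matrix.charpoly] at hmon
  rcases mul_eq_zero.mp hz with h1 | h1
  · exact pow_ne_zero _ (by norm_num : (-1 : ℂ[X]) ≠ 0) h1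
  · exact hmon.ne_zero h1

open Polynomial in
lemma det_map_eq {α : Type} [Fintype α] [DecidableEq α] (N : Matrix α α ℂ) :
    ((N.map (RatFunc.C : ℂ →+* RatFunc ℂ)) - (RatFunc.X : RatFunc ℂ) • 1).det
      = algebraMap ℂ[X] (RatFunc ℂ) (qpoly N) := by
  rw [qpoly, RingHom.map_det]
  congr 1
  rw [RingHom.mapMatrix_apply]
  ext i j
  by_cases hij : i = j <;>
    simp [hij, Matrix.one_apply, Matrix.smul_apply, Matrix.sub_apply, Matrix.map_apply,
      RatFunc.algebraMap_C, RatFunc.algebraMap_X]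

theorem spec_invSpec_isoRed_of_complexMatrix {n : ℕ} (hn : 1 ≤ n)
    (M : Matrix (Fin n) (Fin n) ℂ) (B I : Finset (Fin n))
    (hB : B.Nonempty) (hI : I.Nonempty) (hcompl : I = Bᶜ) :
    IsUnit ((M.map (RatFunc.C : ℂ →+* RatFunc ℂ)).submatrix
        (Subtype.val : ↥I → Fin n) (Subtype.val : ↥I → Fin n) -
        (RatFunc.X : RatFunc ℂ) • 1) ∧
    spec (isoRed (M.map (RatFunc.C : ℂ →+* RatFunc ℂ)) B I) =
      spec (M.map (RatFunc.C : ℂ →+* RatFunc ℂ)) -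
        spec ((M.map (RatFunc.C : ℂ →+* RatFunc ℂ)).submatrix
          (Subtype.val : ↥I → Fin n) (Subtype.val : ↥I → Fin n)) ∧
    invSpec (isoRed (M.map (RatFunc.C : ℂ →+* RatFunc ℂ)) B I) =
      spec ((M.map (RatFunc.C : ℂ →+* RatFunc ℂ)).submatrix
          (Subtype.val : ↥I → Fin n) (Subtype.val : ↥I → Fin n)) -
        spec (M.map (RatFunc.C : ℂ →+* RatFunc ℂ)) := by
  set M' := M.map (RatFunc.C : ℂ →+* RatFunc ℂ) with hM'
  set MI : Matrix ↥I ↥I ℂ :=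
    M.submatrix (Subtype.val : ↥I → Fin n) (Subtype.val : ↥I → Fin n) with hMI
  have hsub : M'.submatrix (Subtype.val : ↥I → Fin n) (Subtype.val : ↥I → Fin n)
      = MI.map (RatFunc.C : ℂ →+* RatFunc ℂ) := rfl
  set D := M'.submatrix (Subtype.val : ↥I → Fin n) (Subtype.val : ↥I → Fin n) -
      (RatFunc.X : RatFunc ℂ) • 1 with hD
  have hdetD : D.det = algebraMap _ (RatFunc ℂ) (qpoly MI) := by
    rw [hD, hsub]; exact det_map_eq MI
  have hdetDne : D.det ≠ 0 := by
    rw [hdetD]; exact RatFunc.algebraMap_ne_zero (qpoly_ne_zero MI)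
  have hUnit : IsUnit D := (Matrix.isUnit_iff_isUnit_det D).mpr (isUnit_iff_ne_zero.mpr hdetDne)
  refine ⟨hUnit, ?_⟩
  -- block equivalence
  let e : ↥B ⊕ ↥I ≃ Fin n :=
    (Equiv.sumCongr (Equiv.refl ↥B)
      (Equiv.subtypeEquivRight (fun x => by simp [hcompl]) : ↥I ≃ {x : Fin n // ¬ x ∈ B})).trans
      (Equiv.sumCompl (· ∈ B))
  have he1 : ∀ i : ↥B, e (Sum.inl i) = ↑i := fun i => rfl
  have he2 : ∀ j : ↥I, e (Sum.inr j) = ↑j := fun j => rfl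
  set A := M' - (RatFunc.X : RatFunc ℂ) • 1 with hA
  have hdisj : ∀ (i : ↥B) (j : ↥I), (i : Fin n) ≠ (j : Fin n) := by
    rintro ⟨i, hi⟩ ⟨j, hj⟩ h
    simp only at h
    subst h
    rw [hcompl, Finset.mem_compl] at hj
    exact hj hi
  have hblock : A.submatrix e e = Matrix.fromBlocks
      (M'.submatrix (Subtype.val : ↥B → Fin n) (Subtype.val : ↥B → Fin n) -
        (RatFunc.X : RatFunc ℂ) • 1)
      (M'.submatrix (Subtype.val : ↥B → Fin n) (Subtype.val : ↥I → Fin n))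
      (M'.submatrix (Subtype.val : ↥I → Fin n) (Subtype.val : ↥B → Fin n)) D := by
    ext i j
    rcases i with i | i <;> rcases j with j | j <;>
      simp only [Matrix.submatrix_apply, he1, he2, Matrix.fromBlocks_apply₁₁,
        Matrix.fromBlocks_apply₁₂, Matrix.fromBlocks_apply₂₁, Matrix.fromBlocks_apply₂₂,
        hA, hD, Matrix.sub_apply, Matrix.smul_apply, Matrix.one_apply, smul_eq_mul]
    · simp [Subtype.val_inj]
    · simp [hdisj i j]
    · simp [Ne.symm (hdisj j i)]
    · simp [Subtype.val_inj]
  haveI : Invertible D := D.invertibleOfIsUnitDet ((Matrix.isUnit_iff_isUnit_det D).mp hUnit)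
  have hdetA : A.det = algebraMap (Polynomial ℂ) (RatFunc ℂ) (qpoly M) := det_map_eq M
  have hschur : A.det = D.det * (isoRed M' B I - (RatFunc.X : RatFunc ℂ) • 1).det := by
    rw [← Matrix.det_submatrix_equiv_self e A, hblock, Matrix.det_fromBlocks₂₂]
    congr 2
    rw [Matrix.invOf_eq_nonsing_inv, isoRed, sub_right_comm]
  have hredet : (isoRed M' B I - (RatFunc.X : RatFunc ℂ) • 1).det
      = algebraMap (Polynomial ℂ) (RatFunc ℂ) (qpoly M)
        / algebraMap (Polynomial ℂ) (RatFunc ℂ) (qpoly MI) := by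
    rw [eq_div_iff (RatFunc.algebraMap_ne_zero (qpoly_ne_zero MI)), ← hdetD, ← hdetA, hschur]
    ring
  obtain ⟨h1, h2⟩ := roots_num_denom_div (qpoly M) (qpoly MI) (qpoly_ne_zero M) (qpoly_ne_zero MI)
  have hspecM : spec M' = (qpoly M).roots := by
    unfold spec
    rw [det_map_eq M, RatFunc.num_algebraMap]
  have hspecMI : spec (M'.submatrix (Subtype.val : ↥I → Fin n) (Subtype.val : ↥I → Fin n))
      = (qpoly MI).roots := by
    unfold spec
    rw [hsub, det_map_eq MI, RatFunc.num_algebraMap]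
  rw [hspecM, hspecMI]
  constructor
  · unfold spec
    rw [hredet, h1]
  · unfold invSpec
    rw [hredet, h2]
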